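/- Let M be a matroid in which every line through a fixed non-loop element e has at most q + 1 points, with ε(M/e) ≤ (q^{r(M)−1} − 1)/(q − 1). Then ε(M) ≤ (q^{r(M)} − 1)/(q − 1). -/

import Mathlib

open Matroid Set

/-- The rank of a set `X` in a matroid `M`: the supremum of sizes of independent subsets. -/
noncomputable def mrk {α : Type*} (M : Matroid α) (X : Set α) : ℕ :=
  ⨆ I : {I : Set α // M.Indep I ∧ I ⊆ X}, I.1.ncard

/-- The rank of a matroid. -/
noncomputable def mrank {α : Type*} (M : Matroid α) : ℕ := mrk M M.E

/-- Deletion of a set from a matroid. -/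
def mdelete {α : Type*} (M : Matroid α) (D : Set α) : Matroid α := M ↾ (M.E \ D)

/-- Contraction of a set in a matroid, via duality. -/
def mcontract {α : Type*} (M : Matroid α) (C : Set α) : Matroid α := (M✶ ↾ (M.E \ C))✶

/-- `eps M X` is the number of points (rank-1 flats) of the restriction `M ↾ X`. -/
noncomputable def eps {α : Type*} (M : Matroid α) (X : Set α) : ℕ :=
  {P : Set α | (M ↾ X).IsFlat P ∧ mrk (M ↾ X) P = 1}.ncard

/-- `N` is isomorphic to the uniform matroid `U_{2,n}` (the `n`-point line). -/
def IsUnif2 {α : Type*} (N : Matroid α) (n : ℕ) : Prop :=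
  N.E.Finite ∧ N.E.ncard = n ∧ ∀ I ⊆ N.E, (N.Indep I ↔ I.Finite ∧ I.ncard ≤ 2)

/-- `M` has a minor isomorphic to `U_{2,n}`. -/
def HasLineMinor {α : Type*} (M : Matroid α) (n : ℕ) : Prop :=
  ∃ C D : Set α, IsUnif2 (mdelete (mcontract M C) D) n

/-- `M` is simple: every one- or two-element subset of the ground set is independent. -/
def MSimple {α : Type*} (M : Matroid α) : Prop :=
  ∀ e ∈ M.E, ∀ f ∈ M.E, M.Indep {e, f}

/-- `M` is round: the ground set admits no partition into two sets of smaller rank. -/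
def Round {α : Type*} (M : Matroid α) : Prop :=
  ¬ ∃ A B : Set α, A ∪ B = M.E ∧ Disjoint A B ∧ mrk M A < mrank M ∧ mrk M B < mrank M

/-- `N` is isomorphic to the projective geometry `PG(n-1, F)`: its ground set is in
bijection with the rank-1 subspaces of `F^n` in such a way that independence corresponds to
linear independence. -/
def IsProjGeom {α : Type*} (N : Matroid α) (n : ℕ) (F : Type*) [Field F] : Prop :=
  ∃ f : α → Submodule F (Fin n → F),
    Set.BijOn f N.E {W : Submodule F (Fin n → F) | Module.finrank F W = 1} ∧
    ∀ I ⊆ N.E, (N.Indep I ↔ I.Finite ∧ Module.finrank F ↥(⨆ x ∈ I, f x) = I.ncard)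

section Aux

variable {α : Type*} {M : Matroid α} {I J X L P Q F B : Set α} {e x z : α}

lemma aux_closure_flat (M : Matroid α) (X : Set α) : M.IsFlat (M.closure X) := by
  rw [Matroid.closure_def]
  have hne : Nonempty ↥{F : Set α | M.IsFlat F ∧ X ∩ M.E ⊆ F} :=
    ⟨⟨M.E, M.ground_isFlat, inter_subset_right⟩⟩
  rw [sInter_eq_iInter]
  exact Matroid.IsFlat.iInter fun F ↦ F.2.1

lemma aux_flat_of_closure (h : M.closure P = P) : M.IsFlat P := h ▸ aux_closure_flat M P

lemma mrk_eq_ncard [M.Finite] (hJ : M.IsBasis' J X) : mrk M X = J.ncard := by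
  have hbdd : BddAbove (Set.range fun I : {I : Set α // M.Indep I ∧ I ⊆ X} ↦ I.1.ncard) := by
    refine ⟨M.E.ncard, ?_⟩
    rintro n ⟨⟨I, hI, hIX⟩, rfl⟩
    exact ncard_le_ncard hI.subset_ground M.ground_finite
  have hne : Nonempty {I : Set α // M.Indep I ∧ I ⊆ X} := ⟨⟨∅, M.empty_indep, empty_subset _⟩⟩
  refine le_antisymm (ciSup_le ?_) (le_ciSup hbdd ⟨J, hJ.indep, hJ.subset⟩)
  rintro ⟨I, hI, hIX⟩
  obtain ⟨B, hB, hIB⟩ := (hI.indep_restrict_of_subset hIX).exists_isBase_superset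
  have h1 : B.ncard = J.ncard := hB.ncard_eq_ncard_of_isBase (Matroid.isBase_restrict_iff'.2 hJ)
  exact h1 ▸ ncard_le_ncard hIB (M.set_finite B hB.indep.of_restrict.subset_ground)

lemma mrk_eq_ncard' [M.Finite] (hJ : M.IsBasis J X) : mrk M X = J.ncard :=
  mrk_eq_ncard ((isBasis'_iff_isBasis hJ.subset_ground).2 hJ)

lemma mrk_restrict [M.Finite] (hL : L ⊆ M.E) (hPL : P ⊆ L) : mrk (M ↾ L) P = mrk M P := by
  haveI : (M ↾ L).Finite := restrict_finite (M.set_finite L hL)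
  obtain ⟨J, hJ⟩ := M.exists_isBasis' P
  have hJ' : (M ↾ L).IsBasis' J P := by
    rw [isBasis'_restrict_iff, inter_eq_self_of_subset_left hPL]
    exact ⟨hJ, hJ.subset.trans hPL⟩
  rw [mrk_eq_ncard hJ', mrk_eq_ncard hJ]

lemma restrict_closure_eq (hL : L ⊆ M.E) (hPL : P ⊆ L) :
    (M ↾ L).closure P = M.closure P ∩ L := by
  obtain ⟨J, hJ⟩ := M.exists_isBasis P (hPL.trans hL)
  have hJ' : (M ↾ L).IsBasis J P := (isBasis_restrict_iff hL).2 ⟨hJ, hPL⟩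
  have hJL : J ⊆ L := hJ.subset.trans hPL
  ext z
  rw [← hJ'.closure_eq_closure, ← hJ.closure_eq_closure, mem_inter_iff,
    hJ'.indep.mem_closure_iff', hJ.indep.mem_closure_iff', restrict_ground_eq,
    restrict_indep_iff]
  constructor
  · rintro ⟨hzL, h⟩
    exact ⟨⟨hL hzL, fun hi ↦ h ⟨hi, insert_subset hzL hJL⟩⟩, hzL⟩
  · rintro ⟨⟨hzE, h⟩, hzL⟩
    exact ⟨hzL, fun hi ↦ h hi.1⟩

lemma restrict_flat_iff' (hL : M.IsFlat L) : (M ↾ L).IsFlat P ↔ M.IsFlat P ∧ P ⊆ L := by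
  constructor
  · intro h
    have hPL : P ⊆ L := h.subset_ground
    have h2 := h.closure
    rw [restrict_closure_eq hL.subset_ground hPL] at h2
    have hsub : M.closure P ⊆ L := by
      rw [← hL.closure]; exact M.closure_subset_closure hPL
    rw [inter_eq_self_of_subset_left hsub] at h2
    exact ⟨aux_flat_of_closure h2, hPL⟩
  · rintro ⟨hP, hPL⟩
    refine aux_flat_of_closure ?_
    rw [restrict_closure_eq hL.subset_ground hPL, hP.closure,
      inter_eq_self_of_subset_left hPL]

lemma points_restrict [M.Finite] (hL : M.IsFlat L) :
    {P : Set α | (M ↾ L).IsFlat P ∧ mrk (M ↾ L) P = 1}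
      = {P : Set α | M.IsFlat P ∧ mrk M P = 1 ∧ P ⊆ L} := by
  ext P
  simp only [mem_setOf_eq]
  constructor
  · rintro ⟨h1, h2⟩
    have hPL : P ⊆ L := h1.subset_ground
    rw [restrict_flat_iff' hL] at h1
    rw [mrk_restrict hL.subset_ground hPL] at h2
    exact ⟨h1.1, h2, hPL⟩
  · rintro ⟨h1, h2, h3⟩
    exact ⟨(restrict_flat_iff' hL).2 ⟨h1, h3⟩, by rwa [mrk_restrict hL.subset_ground h3]⟩

lemma eps_flat_eq [M.Finite] (hL : M.IsFlat L) :
    eps M L = {P : Set α | M.IsFlat P ∧ mrk M P = 1 ∧ P ⊆ L}.ncard := by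
  rw [eps, points_restrict hL]

lemma eps_ground_eq [M.Finite] : eps M M.E = {P : Set α | M.IsFlat P ∧ mrk M P = 1}.ncard := by
  rw [eps_flat_eq M.ground_isFlat]
  congr 1
  ext P
  simp only [mem_setOf_eq, and_congr_right_iff]
  exact fun hP ↦ by simp [hP.subset_ground]

lemma point_eq [M.Finite] (hP : M.IsFlat P) (h1 : mrk M P = 1) (hx : M.Indep {x})
    (hxP : x ∈ P) : P = M.closure {x} := by
  obtain ⟨J, hJ, hxJ⟩ := hx.subset_isBasis_of_subset (singleton_subset_iff.2 hxP)
    hP.subset_ground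
  have hJ1 : J.ncard = 1 := by rw [← mrk_eq_ncard' hJ, h1]
  obtain ⟨a, rfl⟩ := ncard_eq_one.1 hJ1
  obtain rfl : x = a := by simpa using hxJ
  rw [← hP.closure, ← hJ.closure_eq_closure]

lemma con_ground : (mcontract M {e}).E = M.E \ {e} := rfl

lemma dual_basis_compl (he : M.Indep {e}) :
    M✶.IsBasis' B (M.E \ {e}) ↔ M✶.IsBase B ∧ e ∉ B := by
  have heE : e ∈ M.E := he.subset_ground rfl
  constructor
  · intro hB
    have hBs : B ⊆ M.E \ {e} := hB.subset
    have heB : e ∉ B := fun h ↦ (hBs h).2 rfl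
    obtain ⟨B₀, hB₀, heB₀⟩ := he.exists_isBase_superset
    have hB₀d : M✶.IsBase (M.E \ B₀) := hB₀.compl_isBase_dual
    obtain ⟨B', hB', hBB'⟩ := hB.indep.exists_isBase_superset
    by_cases heB' : e ∈ B'
    · have heD : e ∉ M.E \ B₀ := fun h ↦ h.2 (heB₀ rfl)
      obtain ⟨f, hf, hB''⟩ := hB'.exchange hB₀d ⟨heB', heD⟩
      have hfe : f ≠ e := fun h ↦ heD (h ▸ hf.1)
      have hsub : B ⊆ insert f (B' \ {e}) :=
        fun y hy ↦ Or.inr ⟨hBB' hy, fun h ↦ heB (mem_singleton_iff.1 h ▸ hy)⟩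
      have hgr : insert f (B' \ {e}) ⊆ M.E \ {e} := by
        refine insert_subset ⟨hf.1.1, hfe⟩ fun y hy ↦ ⟨hB'.subset_ground hy.1, hy.2⟩
      have heq : B = insert f (B' \ {e}) :=
        subset_antisymm hsub (hB.2 ⟨hB''.indep, hgr⟩ hsub)
      exact ⟨heq ▸ hB'', heB⟩
    · have hgr : B' ⊆ M.E \ {e} :=
        fun y hy ↦ ⟨hB'.subset_ground hy, fun h ↦ heB' (mem_singleton_iff.1 h ▸ hy)⟩
      have heq : B = B' := subset_antisymm hBB' (hB.2 ⟨hB'.indep, hgr⟩ hBB')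
      exact ⟨heq ▸ hB', heB⟩
  · rintro ⟨hB, heB⟩
    refine ⟨⟨hB.indep, fun y hy ↦ ⟨hB.subset_ground hy, fun h ↦ heB (mem_singleton_iff.1 h ▸ hy)⟩⟩,
      fun K hK hBK ↦ ?_⟩
    rw [← hB.eq_of_subset_indep hK.1 hBK]

lemma con_indep_iff (he : M.Indep {e}) :
    (mcontract M {e}).Indep I ↔ e ∉ I ∧ M.Indep (insert e I) := by
  have heE : e ∈ M.E := he.subset_ground rfl
  rw [mcontract, Matroid.dual_indep_iff_exists']
  simp only [restrict_ground_eq, Matroid.isBase_restrict_iff']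
  constructor
  · rintro ⟨hIE, B, hB, hdj⟩
    rw [dual_basis_compl he] at hB
    obtain ⟨hB, heB⟩ := hB
    have hBc := hB.compl_isBase_of_dual
    refine ⟨fun h ↦ (hIE h).2 rfl, hBc.indep.subset ?_⟩
    refine insert_subset ⟨heE, heB⟩ fun y hy ↦ ⟨(hIE hy).1, disjoint_left.1 hdj hy⟩
  · rintro ⟨heI, hi⟩
    obtain ⟨B₀, hB₀, hsub⟩ := hi.exists_isBase_superset
    refine ⟨fun y hy ↦ ⟨hi.subset_ground (Or.inr hy), fun h ↦ heI (mem_singleton_iff.1 h ▸ hy)⟩,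
      M.E \ B₀, ?_, ?_⟩
    · rw [dual_basis_compl he]
      exact ⟨hB₀.compl_isBase_dual, fun h ↦ h.2 (hsub (mem_insert _ _))⟩
    · exact disjoint_left.2 fun y hy h ↦ h.2 (hsub (Or.inr hy))

lemma con_finite [M.Finite] : (mcontract M {e}).Finite := by
  haveI : (M✶ ↾ (M.E \ {e})).Finite := restrict_finite (M.ground_finite.subset diff_subset)
  exact Matroid.dual_finite

lemma con_basis (he : M.Indep {e}) (hX : X ⊆ M.E \ {e}) (hJ : (mcontract M {e}).IsBasis J X) :
    M.IsBasis (insert e J) (insert e X) := by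
  obtain ⟨heJ, hind⟩ := (con_indep_iff he).1 hJ.indep
  refine hind.isBasis_of_subset_of_subset_closure (insert_subset_insert hJ.subset) ?_
  rintro y (rfl | hy)
  · exact M.mem_closure_of_mem' (mem_insert _ _) (he.subset_ground rfl)
  by_cases hyJ : y ∈ J
  · exact M.mem_closure_of_mem' (Or.inr hyJ) (hX hy).1
  have hyne : y ≠ e := fun h ↦ (hX hy).2 (by simp [h])
  have hni : ¬ (mcontract M {e}).Indep (insert y J) := by
    intro hcon
    exact hyJ (by
      have := hJ.eq_of_subset_indep hcon (subset_insert _ _) (insert_subset hy hJ.subset)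
      rw [this]; exact mem_insert _ _)
  rw [con_indep_iff he] at hni
  push_neg at hni
  have hni' : ¬ M.Indep (insert y (insert e J)) := by
    rw [insert_comm]
    exact hni (by simp [Ne.symm hyne, heJ])
  rw [hind.mem_closure_iff']
  exact ⟨(hX hy).1, fun h ↦ absurd h hni'⟩

lemma con_mrk [M.Finite] (he : M.Indep {e}) (hX : X ⊆ M.E \ {e}) :
    mrk M (insert e X) = mrk (mcontract M {e}) X + 1 := by
  haveI : (mcontract M {e}).Finite := con_finite
  obtain ⟨J, hJ⟩ := (mcontract M {e}).exists_isBasis X (by rw [con_ground]; exact hX)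
  have hb := con_basis he hX hJ
  have heJ : e ∉ J := ((con_indep_iff he).1 hJ.indep).1
  rw [mrk_eq_ncard' hb, mrk_eq_ncard' hJ,
    ncard_insert_of_notMem heJ (M.set_finite J (hb.indep.subset (subset_insert _ _)).subset_ground)]

lemma con_closure (he : M.Indep {e}) (hX : X ⊆ M.E \ {e}) :
    (mcontract M {e}).closure X = M.closure (insert e X) \ {e} := by
  obtain ⟨J, hJ⟩ := (mcontract M {e}).exists_isBasis X (by rw [con_ground]; exact hX)
  have hb := con_basis he hX hJ
  obtain ⟨heJ, hind⟩ := (con_indep_iff he).1 hJ.indep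
  ext z
  rw [← hJ.closure_eq_closure, ← hb.closure_eq_closure, mem_diff,
    hJ.indep.mem_closure_iff', hind.mem_closure_iff', con_ground, con_indep_iff he]
  constructor
  · rintro ⟨⟨hzE, hze⟩, himp⟩
    refine ⟨⟨hzE, fun hi ↦ ?_⟩, hze⟩
    have hz' : z ∈ J := himp ⟨by
      rintro (h | h)
      · exact hze (by simp [← h])
      · exact heJ h, by rwa [insert_comm]⟩
    exact Or.inr hz'
  · rintro ⟨⟨hzE, himp⟩, hzne⟩
    refine ⟨⟨hzE, hzne⟩, fun h ↦ ?_⟩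
    obtain ⟨hez, hzi⟩ := h
    have := himp (by rwa [insert_comm] at hzi)
    rcases this with h | h
    · exact absurd h (by simpa using hzne)
    · exact h

lemma con_flat_of_flat (he : M.Indep {e}) (hF : M.IsFlat F) (heF : e ∈ F) :
    (mcontract M {e}).IsFlat (F \ {e}) := by
  have h := con_closure he (X := F \ {e}) (diff_subset_diff_left hF.subset_ground)
  rw [insert_diff_singleton, insert_eq_of_mem heF, hF.closure] at h
  exact aux_flat_of_closure h

lemma flat_insert_of_con_flat (he : M.Indep {e}) (hQ : (mcontract M {e}).IsFlat Q) :
    M.IsFlat (insert e Q) ∧ e ∉ Q := by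
  have heE : e ∈ M.E := he.subset_ground rfl
  have hQs : Q ⊆ M.E \ {e} := hQ.subset_ground
  have h := con_closure he hQs
  rw [hQ.closure] at h
  have hcl : M.closure (insert e Q) = insert e Q := by
    apply subset_antisymm
    · intro z hz
      by_cases hze : z = e
      · exact Or.inl hze
      · exact Or.inr (h ▸ ⟨hz, hze⟩)
    · exact M.subset_closure _ (insert_subset heE fun y hy ↦ (hQs hy).1)
  exact ⟨aux_flat_of_closure hcl, fun h' ↦ (hQs h').2 rfl⟩

lemma cover_card {β : Type*} {S T : Set β} {g : β → Set β} {n : ℕ} (hT : T.Finite)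
    (hfin : ∀ Q ∈ T, (g Q).Finite) (hle : ∀ Q ∈ T, (g Q).ncard ≤ n)
    (hcov : S ⊆ ⋃ Q ∈ T, g Q) : S.ncard ≤ T.ncard * n := by
  classical
  set f : β → Finset β := fun Q ↦ if h : Q ∈ T then (hfin Q h).toFinset else ∅ with hf
  have hsub : S ⊆ ↑(hT.toFinset.biUnion f) := by
    intro y hy
    obtain ⟨Q, hQ, hyQ⟩ := mem_iUnion₂.1 (hcov hy)
    simp only [Finset.coe_biUnion, mem_iUnion, Finset.mem_coe]
    exact ⟨Q, by simpa using hQ, by simp [hf, dif_pos hQ, (hfin Q hQ).mem_toFinset, hyQ]⟩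
  calc S.ncard ≤ (↑(hT.toFinset.biUnion f) : Set β).ncard :=
        ncard_le_ncard hsub (hT.toFinset.biUnion f).finite_toSet
    _ = (hT.toFinset.biUnion f).card := ncard_coe_finset _
    _ ≤ hT.toFinset.card * n := by
        refine Finset.card_biUnion_le_card_mul _ _ _ fun Q hQm ↦ ?_
        have hQ : Q ∈ T := by simpa using hQm
        rw [hf]
        simp only [dif_pos hQ]
        rw [← ncard_eq_toFinset_card _ (hfin Q hQ)]
        exact hle Q hQ
    _ = T.ncard * n := by rw [ncard_eq_toFinset_card _ hT]

end Aux

/-- If every line through a non-loop `e` has at most `q+1` points and `M/e` has at most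
`(q^(r-1)-1)/(q-1)` points, then `M` has at most `(q^r-1)/(q-1)` points. -/
theorem stmt10 {α : Type*} (M : Matroid α) [M.Finite] (q : ℕ) (hq : 2 ≤ q)
    (e : α) (he : M.Indep {e})
    (hlines : ∀ L, M.IsFlat L → mrk M L = 2 → e ∈ L → eps M L ≤ q + 1)
    (hcon : (eps (mcontract M {e}) (mcontract M {e}).E : ℝ) ≤
      ((q : ℝ) ^ (mrank M - 1) - 1) / ((q : ℝ) - 1)) :
    (eps M M.E : ℝ) ≤ ((q : ℝ) ^ mrank M - 1) / ((q : ℝ) - 1) := by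
  classical
  have heE : e ∈ M.E := he.subset_ground rfl
  set N := mcontract M {e} with hN
  haveI hNf : N.Finite := con_finite
  set S := {P : Set α | M.IsFlat P ∧ mrk M P = 1} with hS
  set T := {Q : Set α | N.IsFlat Q ∧ mrk N Q = 1} with hT
  set P₀ := M.closure {e} with hP0
  have hSfin : S.Finite := M.ground_finite.finite_subsets.subset fun P hP ↦ hP.1.subset_ground
  have hTfin : T.Finite := N.ground_finite.finite_subsets.subset fun Q hQ ↦ hQ.1.subset_ground
  have hP0flat : M.IsFlat P₀ := aux_closure_flat M {e}
  have hP0rk : mrk M P₀ = 1 := by rw [mrk_eq_ncard' he.isBasis_closure, ncard_singleton]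
  -- the set of points inside a line through e, other than P₀, has size ≤ q
  have key1 : ∀ Q ∈ T,
      (({P : Set α | M.IsFlat P ∧ mrk M P = 1 ∧ P ⊆ insert e Q} \ {P₀}) : Set (Set α)).ncard ≤ q := by
    intro Q hQ
    obtain ⟨hLflat, heQ⟩ := flat_insert_of_con_flat he hQ.1
    have hQs : Q ⊆ M.E \ {e} := hQ.1.subset_ground
    have hL2 : mrk M (insert e Q) = 2 := by rw [con_mrk he hQs, hQ.2]
    have hle := hlines _ hLflat hL2 (mem_insert _ _)
    rw [eps_flat_eq hLflat] at hle
    have hfin : ({P : Set α | M.IsFlat P ∧ mrk M P = 1 ∧ P ⊆ insert e Q}).Finite :=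
      M.ground_finite.finite_subsets.subset fun P hP ↦ hP.1.subset_ground
    have hP0mem : P₀ ∈ {P : Set α | M.IsFlat P ∧ mrk M P = 1 ∧ P ⊆ insert e Q} := by
      refine ⟨hP0flat, hP0rk, ?_⟩
      have : M.closure {e} ⊆ M.closure (insert e Q) :=
        M.closure_subset_closure (singleton_subset_iff.2 (mem_insert _ _))
      rwa [hLflat.closure] at this
    rw [ncard_diff_singleton_of_mem hP0mem]
    omega
  -- every point other than P₀ lies in such a line
  have key2 : S \ {P₀} ⊆
      ⋃ Q ∈ T, ({P : Set α | M.IsFlat P ∧ mrk M P = 1 ∧ P ⊆ insert e Q} \ {P₀}) := by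
    rintro P ⟨⟨hPflat, hPrk⟩, hPne⟩
    have hPne' : P ≠ P₀ := by simpa using hPne
    have hPE : P ⊆ M.E := hPflat.subset_ground
    have heP : e ∉ P := fun hmem ↦ hPne' (point_eq hPflat hPrk he hmem)
    obtain ⟨Jp, hJp⟩ := M.exists_isBasis P hPE
    have hJ1 : Jp.ncard = 1 := by rw [← mrk_eq_ncard' hJp, hPrk]
    obtain ⟨x, rfl⟩ := ncard_eq_one.1 hJ1
    have hxP : x ∈ P := hJp.subset rfl
    have hclx : M.closure {x} = P := by rw [hJp.closure_eq_closure, hPflat.closure]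
    have hxe : e ∉ ({x} : Set α) := fun h ↦ heP (mem_singleton_iff.1 h ▸ hxP)
    have hK : M.Indep (insert e {x}) := by
      rw [hJp.indep.insert_indep_iff_of_notMem hxe]
      exact ⟨heE, by rw [hclx]; exact heP⟩
    have hKb : M.IsBasis (insert e {x}) (M.closure (insert e {x})) := hK.isBasis_closure
    set L := M.closure (insert e {x}) with hLdef
    have hLflat : M.IsFlat L := aux_closure_flat _ _
    have heL : e ∈ L := M.mem_closure_of_mem' (mem_insert _ _) heE
    have hL2 : mrk M L = 2 := by
      rw [mrk_eq_ncard' hKb, ncard_insert_of_notMem hxe (finite_singleton x), ncard_singleton]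
    have hQflat : N.IsFlat (L \ {e}) := con_flat_of_flat he hLflat heL
    have hins : insert e (L \ {e}) = L := by
      rw [insert_diff_singleton, insert_eq_of_mem heL]
    have hQrk : mrk N (L \ {e}) = 1 := by
      have h := con_mrk he (X := L \ {e}) (diff_subset_diff_left hLflat.subset_ground)
      rw [hins, hL2, ← hN] at h
      omega
    have hPL : P ⊆ L := by
      rw [← hclx]
      exact M.closure_subset_closure (by simp)
    exact mem_biUnion (⟨hQflat, hQrk⟩ : L \ {e} ∈ T)
      ⟨⟨hPflat, hPrk, by rw [hins]; exact hPL⟩, by simpa using hPne'⟩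
  have hcov := cover_card hTfin
    (fun Q _ ↦ (M.ground_finite.finite_subsets.subset fun P hP ↦ hP.1.1.subset_ground :
      ({P : Set α | M.IsFlat P ∧ mrk M P = 1 ∧ P ⊆ insert e Q} \ {P₀}).Finite))
    key1 key2
  have hS1 : S.ncard ≤ T.ncard * q + 1 := by
    have hsub : S ⊆ insert P₀ (S \ {P₀}) := by
      intro P hP
      by_cases h : P = P₀
      · exact Or.inl h
      · exact Or.inr ⟨hP, by simpa using h⟩
    calc S.ncard ≤ (insert P₀ (S \ {P₀})).ncard :=
          ncard_le_ncard hsub ((hSfin.diff).insert _)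
      _ ≤ (S \ {P₀}).ncard + 1 := ncard_insert_le _ _
      _ ≤ T.ncard * q + 1 := by omega
  have hepsM : eps M M.E = S.ncard := eps_ground_eq
  have hepsN : eps N N.E = T.ncard := eps_ground_eq
  have hr1 : 1 ≤ mrank M := by
    obtain ⟨J, hJ, hsub⟩ := he.subset_isBasis_of_subset (singleton_subset_iff.2 heE)
    rw [mrank, mrk_eq_ncard' hJ]
    have hne : J.Nonempty := ⟨e, hsub rfl⟩
    have := (ncard_pos (M.set_finite J hJ.indep.subset_ground)).2 hne
    omega
  -- final arithmetic
  have hq1 : (1 : ℝ) < (q : ℝ) := by exact_mod_cast lt_of_lt_of_le one_lt_two hq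
  have hd : (0 : ℝ) < (q : ℝ) - 1 := by linarith
  rw [le_div_iff₀ hd]
  have h3 : (eps N N.E : ℝ) * ((q : ℝ) - 1) ≤ (q : ℝ) ^ (mrank M - 1) - 1 :=
    (le_div_iff₀ hd).1 hcon
  have h1 : (eps M M.E : ℝ) ≤ (eps N N.E : ℝ) * (q : ℝ) + 1 := by
    rw [hepsM, hepsN]
    exact_mod_cast hS1
  have h2 : (q : ℝ) ^ (mrank M - 1) * (q : ℝ) = (q : ℝ) ^ (mrank M) := by
    rw [← pow_succ]
    congr 1
    omega
  nlinarith [mul_le_mul_of_nonneg_left h3 (by positivity : (0 : ℝ) ≤ (q : ℝ))]
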